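/- Let v : ℝ³ × ℝ → ℝ³ be continuously differentiable in the spatial variable, and let φ, π : ℝ³ × ℝ → ℝ³ be differentiable and satisfy the extremal equations ∂φ/∂t(X,t) = v(φ(X,t), t) and ∂π/∂t(X,t) = −(Dv(φ(X,t), t))ᵀ π(X,t) for all (X,t). Suppose z : ℝ³ × ℝ → ℝ³ is differentiable (in space and time), satisfies z(φ(X,t), t) = π(X,t) for all (X,t) (i.e. z = π ∘ φ⁻¹), and φ(·,t) : ℝ³ → ℝ³ is surjective for every t. Then z satisfies the impulse equation ∂z/∂t(x,t) + Dz(x,t) v(x,t) + (Dv(x,t))ᵀ z(x,t) = 0 for all (x,t). -/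

import Mathlib

open Matrix

/-- The Jacobian matrix of a vector field `u : ℝ³ → ℝ³` at `x`:
`(jacAt u x) i j = ∂uᵢ/∂xⱼ (x)`. -/
noncomputable def jacAt (u : (Fin 3 → ℝ) → (Fin 3 → ℝ)) (x : Fin 3 → ℝ) :
    Matrix (Fin 3) (Fin 3) ℝ :=
  fun i j => fderiv ℝ u x (Pi.single j 1) i

/-- The gradient of a scalar function `f : ℝ³ → ℝ` at `x`. -/
noncomputable def gradAt (f : (Fin 3 → ℝ) → ℝ) (x : Fin 3 → ℝ) : Fin 3 → ℝ :=
  fun i => fderiv ℝ f x (Pi.single i 1)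

/-- The curl of a vector field `u : ℝ³ → ℝ³` at `x`. -/
noncomputable def curlAt (u : (Fin 3 → ℝ) → (Fin 3 → ℝ)) (x : Fin 3 → ℝ) : Fin 3 → ℝ :=
  ![jacAt u x 2 1 - jacAt u x 1 2,
    jacAt u x 0 2 - jacAt u x 2 0,
    jacAt u x 1 0 - jacAt u x 0 1]

/-- The divergence of a vector field `u : ℝ³ → ℝ³` at `x`. -/
noncomputable def divAt (u : (Fin 3 → ℝ) → (Fin 3 → ℝ)) (x : Fin 3 → ℝ) : ℝ :=
  ∑ i, jacAt u x i i

/-- If `(φ, π)` solve the extremal equations `∂φ/∂t = v ∘ φ`,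
`∂π/∂t = −(Dv ∘ φ)ᵀ π`, and `z = π ∘ φ⁻¹` (i.e. `z(φ(X,t),t) = π(X,t)` with
`φ(·,t)` surjective), then the Eulerian impulse density `z` satisfies
`∂z/∂t + Dz·v + (Dv)ᵀ·z = 0`. -/
lemma jac_mulVec (u : (Fin 3 → ℝ) → (Fin 3 → ℝ)) (x a : Fin 3 → ℝ) :
    jacAt u x *ᵥ a = fderiv ℝ u x a := by
  funext i
  have ha : a = ∑ j, a j • (Pi.single j 1 : Fin 3 → ℝ) := by
    funext k
    simp [Finset.sum_apply, Pi.single_apply]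
  conv_rhs => rw [ha]
  rw [map_sum]
  simp [Matrix.mulVec, dotProduct, jacAt, Finset.sum_apply, mul_comm]

theorem extremal_implies_impulse
    (v : (Fin 3 → ℝ) × ℝ → (Fin 3 → ℝ))
    (hv : ∀ t : ℝ, ContDiff ℝ 1 (fun x => v (x, t)))
    (φ π : (Fin 3 → ℝ) × ℝ → (Fin 3 → ℝ))
    (hφ : Differentiable ℝ φ) (hπ : Differentiable ℝ π)
    (hφeq : ∀ (X : Fin 3 → ℝ) (t : ℝ),
      deriv (fun s => φ (X, s)) t = v (φ (X, t), t))
    (hπeq : ∀ (X : Fin 3 → ℝ) (t : ℝ),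
      deriv (fun s => π (X, s)) t
        = -((jacAt (fun y => v (y, t)) (φ (X, t)))ᵀ *ᵥ π (X, t)))
    (z : (Fin 3 → ℝ) × ℝ → (Fin 3 → ℝ)) (hz : Differentiable ℝ z)
    (hzπ : ∀ (X : Fin 3 → ℝ) (t : ℝ), z (φ (X, t), t) = π (X, t))
    (hsurj : ∀ t : ℝ, Function.Surjective (fun X => φ (X, t))) :
    ∀ (x : Fin 3 → ℝ) (t : ℝ),
      deriv (fun s => z (x, s)) t
        + jacAt (fun y => z (y, t)) x *ᵥ v (x, t)
        + (jacAt (fun y => v (y, t)) x)ᵀ *ᵥ z (x, t) = 0 := by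
  intro x t
  obtain ⟨X, hX⟩ := hsurj t x
  simp only at hX
  -- derivative of s ↦ φ(X,s)
  have hφd : HasDerivAt (fun s => φ (X, s)) (v (x, t)) t := by
    have h1 : DifferentiableAt ℝ (fun s => φ (X, s)) t :=
      (hφ (X, t)).comp t (DifferentiableAt.prodMk (differentiableAt_const X) differentiableAt_id)
    have := h1.hasDerivAt
    rwa [hφeq X t, hX] at this
  -- derivative of s ↦ (φ(X,s), s)
  have hpair : HasDerivAt (fun s => (φ (X, s), s)) (v (x, t), 1) t :=
    HasDerivAt.prodMk hφd (hasDerivAt_id t)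
  have hzf : HasFDerivAt z (fderiv ℝ z (x, t)) (x, t) := (hz (x, t)).hasFDerivAt
  -- chain rule: d/ds z(φ(X,s),s)
  have hchain : HasDerivAt (fun s => z (φ (X, s), s))
      (fderiv ℝ z (x, t) (v (x, t), 1)) t := by
    have h0 : HasFDerivAt z (fderiv ℝ z (x, t)) (φ (X, t), t) := by rw [hX]; exact hzf
    exact HasFDerivAt.comp_hasDerivAt (f := fun s => (φ (X, s), s)) t h0 hpair
  have hπside : deriv (fun s => z (φ (X, s), s)) t
      = -((jacAt (fun y => v (y, t)) x)ᵀ *ᵥ z (x, t)) := by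
    have he : (fun s => z (φ (X, s), s)) = fun s => π (X, s) := by
      funext s; exact hzπ X s
    rw [he, hπeq X t, hX, ← hzπ X t, hX]
  have hchain' : fderiv ℝ z (x, t) (v (x, t), 1)
      = -((jacAt (fun y => v (y, t)) x)ᵀ *ᵥ z (x, t)) := by
    rw [← hchain.deriv, hπside]
  -- time derivative of z at fixed x
  have ht : HasDerivAt (fun s => z (x, s)) (fderiv ℝ z (x, t) (0, 1)) t := by
    have hp : HasDerivAt (Prod.mk x : ℝ → (Fin 3 → ℝ) × ℝ) ((0 : Fin 3 → ℝ), 1) t :=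
      HasDerivAt.prodMk (hasDerivAt_const t x) (hasDerivAt_id t)
    exact hzf.comp_hasDerivAt t hp
  -- spatial derivative of z at fixed t
  have hsp : fderiv ℝ (fun y => z (y, t)) x (v (x, t)) = fderiv ℝ z (x, t) (v (x, t), 0) := by
    have hp : HasFDerivAt (fun y : Fin 3 → ℝ => (y, t))
        (ContinuousLinearMap.inl ℝ (Fin 3 → ℝ) ℝ) x :=
      HasFDerivAt.prodMk (hasFDerivAt_id x) (hasFDerivAt_const t x)
    have h2 := (hzf.comp x hp).fderiv
    simp only [Function.comp_def] at h2
    rw [h2]; rfl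
  have hsplit : fderiv ℝ z (x, t) (v (x, t), 1)
      = fderiv ℝ z (x, t) (v (x, t), 0) + fderiv ℝ z (x, t) (0, 1) := by
    rw [← map_add]
    norm_num
  rw [ht.deriv, jac_mulVec, hsp]
  have := hchain'
  rw [hsplit] at this
  linear_combination (norm := abel) this
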